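/- Lower semicontinuity of Luxemburg norms along varying exponents (Lemma 2.8): Let p and p_h (h ∈ ℕ) all belong to the class 𝒞 with p_h(x) → p(x) as h → ∞ for every x ∈ Ω. Let u ∈ L^{p(x)}(Ω), let u_h ∈ L^{p_h(x)}(Ω) for every h, and suppose u_h → u almost everywhere in Ω. Then ‖u‖_{p(x)} ≤ liminf_{h→∞} ‖u_h‖_{p_h(x)}. -/

import Mathlib

open MeasureTheory Filter Topology

/-- The `p(x)`-modular `ρ_{p(x)}(u) = ∫_Ω |u(x)|^{p(x)} dx`, valued in `ℝ≥0∞`. -/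
noncomputable def pModular {N : ℕ} (Ω : Set (EuclideanSpace ℝ (Fin N)))
    (p u : EuclideanSpace ℝ (Fin N) → ℝ) : ENNReal :=
  ∫⁻ x in Ω, ENNReal.ofReal (|u x| ^ p x)

/-- The Luxemburg norm `‖u‖_{p(x)} = inf {γ > 0 : ρ_{p(x)}(u/γ) ≤ 1}`. -/
noncomputable def luxNorm {N : ℕ} (Ω : Set (EuclideanSpace ℝ (Fin N)))
    (p u : EuclideanSpace ℝ (Fin N) → ℝ) : ℝ :=
  sInf {γ : ℝ | 0 < γ ∧ pModular Ω p (fun x => u x / γ) ≤ 1}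

/-- The class `𝒞` of admissible exponents: `p` extends continuously to the
closure of `Ω`, satisfies `1 < inf_Ω p ≤ p(x) ≤ sup_Ω p < N`, and is
log-Hölder continuous. -/
def InClassC {N : ℕ} (Ω : Set (EuclideanSpace ℝ (Fin N)))
    (p : EuclideanSpace ℝ (Fin N) → ℝ) : Prop :=
  ContinuousOn p (closure Ω) ∧
  (∃ pm pM : ℝ, 1 < pm ∧ pM < (N : ℝ) ∧ ∀ x ∈ Ω, pm ≤ p x ∧ p x ≤ pM) ∧
  (∃ L : ℝ, 0 < L ∧ ∀ x ∈ Ω, ∀ y ∈ Ω, 0 < dist x y → dist x y ≤ 1 / 2 →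
    |p x - p y| ≤ -L / Real.log (dist x y))

/-- Monotonicity of the modular in the scaling parameter. -/
lemma pModular_div_mono {N : ℕ} {Ω : Set (EuclideanSpace ℝ (Fin N))}
    (hΩ : MeasurableSet Ω) {q v : EuclideanSpace ℝ (Fin N) → ℝ}
    (hq : ∀ x ∈ Ω, 0 ≤ q x) {γ' γ : ℝ} (hγ' : 0 < γ') (hγ : γ' ≤ γ) :
    pModular Ω q (fun x => v x / γ) ≤ pModular Ω q (fun x => v x / γ') := by
  unfold pModular
  refine lintegral_mono_ae ?_
  filter_upwards [ae_restrict_mem hΩ] with x hx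
  refine ENNReal.ofReal_le_ofReal ?_
  refine Real.rpow_le_rpow (abs_nonneg _) ?_ (hq x hx)
  have h0 : 0 < γ := lt_of_lt_of_le hγ' hγ
  rw [abs_div, abs_div, abs_of_pos h0, abs_of_pos hγ']
  gcongr

/-- The defining set of the Luxemburg norm is nonempty when the modular is finite. -/
lemma pModular_div_exists_le_one {N : ℕ} {Ω : Set (EuclideanSpace ℝ (Fin N))}
    (hΩ : MeasurableSet Ω) {q v : EuclideanSpace ℝ (Fin N) → ℝ}
    (hq : ∀ x ∈ Ω, 1 ≤ q x) (hv : pModular Ω q v < ⊤) :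
    ∃ γ : ℝ, 0 < γ ∧ pModular Ω q (fun x => v x / γ) ≤ 1 := by
  set M : ENNReal := pModular Ω q v with hM
  refine ⟨max 1 M.toReal, lt_of_lt_of_le one_pos (le_max_left _ _), ?_⟩
  set γ : ℝ := max 1 M.toReal with hγdef
  have hγ1 : (1 : ℝ) ≤ γ := le_max_left _ _
  have hγ0 : (0 : ℝ) < γ := lt_of_lt_of_le one_pos hγ1
  have hoγ0 : ENNReal.ofReal γ ≠ 0 := by
    simp [ENNReal.ofReal_eq_zero, not_le, hγ0]
  have hoγtop : ENNReal.ofReal γ ≠ ⊤ := ENNReal.ofReal_ne_top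
  have key : pModular Ω q (fun x => v x / γ) ≤ (ENNReal.ofReal γ)⁻¹ * M := by
    have step : pModular Ω q (fun x => v x / γ) ≤
        ∫⁻ x in Ω, (ENNReal.ofReal γ)⁻¹ * ENNReal.ofReal (|v x| ^ q x) := by
      unfold pModular
      refine lintegral_mono_ae ?_
      filter_upwards [ae_restrict_mem hΩ] with x hx
      have h1 : |v x / γ| ^ q x ≤ |v x| ^ q x / γ := by
        rw [abs_div, abs_of_pos hγ0, Real.div_rpow (abs_nonneg _) hγ0.le]
        have hγq : γ ≤ γ ^ q x := by
          calc γ = γ ^ (1 : ℝ) := (Real.rpow_one γ).symm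
            _ ≤ γ ^ q x := Real.rpow_le_rpow_of_exponent_le hγ1 (hq x hx)
        gcongr
      calc ENNReal.ofReal (|v x / γ| ^ q x)
          ≤ ENNReal.ofReal (|v x| ^ q x / γ) := ENNReal.ofReal_le_ofReal h1
        _ = ENNReal.ofReal (|v x| ^ q x) / ENNReal.ofReal γ :=
            ENNReal.ofReal_div_of_pos hγ0
        _ = (ENNReal.ofReal γ)⁻¹ * ENNReal.ofReal (|v x| ^ q x) := by
            rw [ENNReal.div_eq_inv_mul]
    calc pModular Ω q (fun x => v x / γ)
        ≤ ∫⁻ x in Ω, (ENNReal.ofReal γ)⁻¹ * ENNReal.ofReal (|v x| ^ q x) := step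
      _ = (ENNReal.ofReal γ)⁻¹ * M := by
          rw [lintegral_const_mul' _ _ (ENNReal.inv_ne_top.mpr hoγ0)]
          rfl
  refine key.trans ?_
  have hMle : M ≤ ENNReal.ofReal γ := by
    calc M = ENNReal.ofReal M.toReal := (ENNReal.ofReal_toReal hv.ne).symm
      _ ≤ ENNReal.ofReal γ := ENNReal.ofReal_le_ofReal (le_max_right _ _)
  calc (ENNReal.ofReal γ)⁻¹ * M ≤ (ENNReal.ofReal γ)⁻¹ * ENNReal.ofReal γ := by
        gcongr
    _ = 1 := ENNReal.inv_mul_cancel hoγ0 hoγtop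

/-- Lower semicontinuity of Luxemburg norms along varying exponents:
`‖u‖_{p(x)} ≤ liminf_h ‖u_h‖_{p_h(x)}` whenever `p_h → p` pointwise on `Ω` and
`u_h → u` a.e. in `Ω`. The `liminf` is taken in `ℝ≥0∞` to allow the value `∞`. -/
theorem luxNorm_lower_semicontinuous {N : ℕ} (hN : 2 ≤ N)
    (Ω : Set (EuclideanSpace ℝ (Fin N))) (hΩopen : IsOpen Ω)
    (hΩbdd : Bornology.IsBounded Ω)
    (p : EuclideanSpace ℝ (Fin N) → ℝ)
    (ph : ℕ → EuclideanSpace ℝ (Fin N) → ℝ)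
    (hp : InClassC Ω p) (hph : ∀ h, InClassC Ω (ph h))
    (hconv : ∀ x ∈ Ω, Tendsto (fun h => ph h x) atTop (𝓝 (p x)))
    (u : EuclideanSpace ℝ (Fin N) → ℝ)
    (humeas : Measurable u) (humem : pModular Ω p u < ⊤)
    (uh : ℕ → EuclideanSpace ℝ (Fin N) → ℝ)
    (huhmeas : ∀ h, Measurable (uh h))
    (huhmem : ∀ h, pModular Ω (ph h) (uh h) < ⊤)
    (hae : ∀ᵐ x ∂(volume.restrict Ω), Tendsto (fun h => uh h x) atTop (𝓝 (u x))) :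
    ENNReal.ofReal (luxNorm Ω p u) ≤
      liminf (fun h => ENNReal.ofReal (luxNorm Ω (ph h) (uh h))) atTop := by
  have hΩmeas : MeasurableSet Ω := hΩopen.measurableSet
  refine le_of_forall_gt_imp_ge_of_dense fun c hc => ?_
  rcases eq_or_ne c ⊤ with rfl | hctop
  · exact le_top
  set γ : ℝ := c.toReal with hγdef
  have hc0 : (0 : ENNReal) < c := lt_of_le_of_lt (zero_le (a := _)) hc
  have hγ0 : 0 < γ := ENNReal.toReal_pos hc0.ne' hctop
  have hcγ : c = ENNReal.ofReal γ := (ENNReal.ofReal_toReal hctop).symm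
  -- frequently, the luxNorm of u_h is < γ, hence the modular of u_h/γ is ≤ 1
  have hfreq : ∃ᶠ h in atTop, ENNReal.ofReal (luxNorm Ω (ph h) (uh h)) < c :=
    frequently_lt_of_liminf_lt (by isBoundedDefault) hc
  have hkey : ∃ᶠ h in atTop, pModular Ω (ph h) (fun x => uh h x / γ) ≤ 1 := by
    refine hfreq.mono fun h hh => ?_
    rw [hcγ, ENNReal.ofReal_lt_ofReal_iff hγ0] at hh
    obtain ⟨pm, pM, hpm1, _, hpmb⟩ := (hph h).2.1
    have hq1 : ∀ x ∈ Ω, 1 ≤ ph h x := fun x hx => hpm1.le.trans (hpmb x hx).1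
    obtain ⟨γ₀, hγ₀⟩ := pModular_div_exists_le_one hΩmeas hq1 (huhmem h)
    have hne : {γ : ℝ | 0 < γ ∧ pModular Ω (ph h) (fun x => uh h x / γ) ≤ 1}.Nonempty :=
      ⟨γ₀, hγ₀⟩
    obtain ⟨γ', hγ'mem, hγ'lt⟩ := exists_lt_of_csInf_lt hne hh
    exact (pModular_div_mono hΩmeas
      (fun x hx => (zero_le_one.trans (hq1 x hx))) hγ'mem.1 hγ'lt.le).trans hγ'mem.2
  obtain ⟨φ, hφmono, hφ⟩ := Filter.extraction_of_frequently_atTop hkey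
  -- Fatou along the subsequence
  have hmeasn : ∀ n, AEMeasurable
      (fun x => ENNReal.ofReal (|uh (φ n) x / γ| ^ ph (φ n) x)) (volume.restrict Ω) := by
    intro n
    have h1 : AEMeasurable (fun x => |uh (φ n) x / γ|) (volume.restrict Ω) :=
      (((huhmeas (φ n)).div_const γ).abs).aemeasurable
    have h2 : AEMeasurable (ph (φ n)) (volume.restrict Ω) :=
      ((hph (φ n)).1.mono subset_closure).aemeasurable hΩmeas
    exact ENNReal.measurable_ofReal.comp_aemeasurable (h1.pow h2)
  have hmod : pModular Ω p (fun x => u x / γ) ≤ 1 := by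
    have hptwise : ∀ᵐ x ∂(volume.restrict Ω),
        ENNReal.ofReal (|u x / γ| ^ p x) =
          liminf (fun n => ENNReal.ofReal (|uh (φ n) x / γ| ^ ph (φ n) x)) atTop := by
      filter_upwards [hae, ae_restrict_mem hΩmeas] with x hx hxΩ
      have h1 : Tendsto (fun n => uh (φ n) x) atTop (𝓝 (u x)) :=
        hx.comp hφmono.tendsto_atTop
      have h2 : Tendsto (fun n => ph (φ n) x) atTop (𝓝 (p x)) :=
        (hconv x hxΩ).comp hφmono.tendsto_atTop
      obtain ⟨pm, pM, hpm1, _, hpmb⟩ := hp.2.1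
      have hpx : 0 < p x := lt_of_lt_of_le (lt_of_lt_of_le one_pos hpm1.le) (hpmb x hxΩ).1
      have h3 : Tendsto (fun n => |uh (φ n) x / γ| ^ ph (φ n) x) atTop
          (𝓝 (|u x / γ| ^ p x)) :=
        Tendsto.rpow ((h1.div_const γ).abs) h2 (Or.inr hpx)
      have h4 : Tendsto (fun n => ENNReal.ofReal (|uh (φ n) x / γ| ^ ph (φ n) x)) atTop
          (𝓝 (ENNReal.ofReal (|u x / γ| ^ p x))) :=
        (ENNReal.continuous_ofReal.tendsto _).comp h3
      exact h4.liminf_eq.symm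
    calc pModular Ω p (fun x => u x / γ)
        = ∫⁻ x in Ω, liminf
            (fun n => ENNReal.ofReal (|uh (φ n) x / γ| ^ ph (φ n) x)) atTop :=
          lintegral_congr_ae hptwise
      _ ≤ liminf (fun n => pModular Ω (ph (φ n)) (fun x => uh (φ n) x / γ)) atTop :=
          lintegral_liminf_le' hmeasn
      _ ≤ liminf (fun _ : ℕ => (1 : ENNReal)) atTop :=
          Filter.liminf_le_liminf (Filter.Eventually.of_forall fun n => hφ n)
      _ = 1 := liminf_const 1
  -- conclude
  have hlux : luxNorm Ω p u ≤ γ := by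
    refine csInf_le ⟨0, fun y hy => hy.1.le⟩ ⟨hγ0, hmod⟩
  rw [hcγ]
  exact ENNReal.ofReal_le_ofReal hlux
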